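/- Binary intersection of guarded languages is not a regular operation: there is no KAT expression e over action variables {p₁, p₂} and no tests such that for all guarded languages L₁, L₂, the substitution operation O_e(L₁, L₂) equals L₁ ∩ L₂. -/
import Mathlib


/-- A guarded string candidate: a list of atoms (sets of tests) and actions. -/
abbrev GList (A T : Type) := List (Set T ⊕ A)

/-- Guarded strings: nonempty alternating sequences starting and ending with an atom. -/
inductive IsGuarded {A T : Type} : GList A T → Prop
  | single (α : Set T) : IsGuarded [Sum.inl α]
  | cons (α : Set T) (p : A) {l : GList A T} : IsGuarded l →
      IsGuarded (Sum.inl α :: Sum.inr p :: l)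

/-- Guarded composition of guarded languages: fuse matching boundary atoms. -/
def gcomp {A T : Type} (L K : Set (GList A T)) : Set (GList A T) :=
  { z | ∃ (w : GList A T) (α : Set T) (x : GList A T),
      w ++ [Sum.inl α] ∈ L ∧ Sum.inl α :: x ∈ K ∧ z = w ++ Sum.inl α :: x }

/-- The language of all length-one guarded strings (all atoms). -/
def atomsLang {A T : Type} : Set (GList A T) := { w | ∃ α : Set T, w = [Sum.inl α] }

/-- Iterated guarded composition. -/
def gpow {A T : Type} (L : Set (GList A T)) : ℕ → Set (GList A T)
  | 0 => atomsLang
  | n + 1 => gcomp L (gpow L n)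

/-- Guarded star. -/
def gstar {A T : Type} (L : Set (GList A T)) : Set (GList A T) := ⋃ n, gpow L n

/-- Boolean (test) expressions over test variables T. -/
inductive BExp (T : Type) where
  | tru : BExp T
  | fls : BExp T
  | var (t : T) : BExp T
  | or (b c : BExp T) : BExp T
  | and (b c : BExp T) : BExp T
  | not (b : BExp T) : BExp T

/-- Satisfaction of a test by an atom (truth assignment). -/
def BExp.holds {T : Type} (α : Set T) : BExp T → Prop
  | .tru => True
  | .fls => False
  | .var t => t ∈ α
  | .or b c => BExp.holds α b ∨ BExp.holds α c
  | .and b c => BExp.holds α b ∧ BExp.holds α c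
  | .not b => ¬ BExp.holds α b

/-- The guarded language of a test. -/
def testLang {A T : Type} (b : BExp T) : Set (GList A T) :=
  { w | ∃ α : Set T, b.holds α ∧ w = [Sum.inl α] }

/-- KAT expressions over actions A and tests T. -/
inductive KExp (A T : Type) where
  | test (b : BExp T) : KExp A T
  | act (p : A) : KExp A T
  | plus (e f : KExp A T) : KExp A T
  | seq (e f : KExp A T) : KExp A T
  | star (e : KExp A T) : KExp A T

/-- Language semantics of KAT. -/
def lang {A T : Type} : KExp A T → Set (GList A T)
  | .test b => testLang b
  | .act p => { w | ∃ α β : Set T, w = [Sum.inl α, Sum.inr p, Sum.inl β] }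
  | .plus e f => lang e ∪ lang f
  | .seq e f => gcomp (lang e) (lang f)
  | .star e => gstar (lang e)

/-- Semantics of a test under a valuation τ on states S. -/
def bsem {T S : Type} (τ : T → Set S) : BExp T → Set S
  | .tru => Set.univ
  | .fls => ∅
  | .var t => τ t
  | .or b c => bsem τ b ∪ bsem τ c
  | .and b c => bsem τ b ∩ bsem τ c
  | .not b => (bsem τ b)ᶜ

/-- Relational semantics of KAT under an interpretation (S, τ, σ). -/
def rsem {A T S : Type} (τ : T → Set S) (σ : A → S → S → Prop) : KExp A T → S → S → Prop
  | .test b => fun s s' => s = s' ∧ s ∈ bsem τ b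
  | .act p => σ p
  | .plus e f => fun s s' => rsem τ σ e s s' ∨ rsem τ σ f s s'
  | .seq e f => fun s s' => ∃ s'', rsem τ σ e s s'' ∧ rsem τ σ f s'' s'
  | .star e => Relation.ReflTransGen (rsem τ σ e)

/-- A relation is a partial function. -/
def Functional {S : Type} (r : S → S → Prop) : Prop :=
  ∀ s s₁ s₂, r s s₁ → r s s₂ → s₁ = s₂

/-- A KAT expression is deterministic: it maps functional interpretations to functional relations. -/
def DetExp {A T : Type} (e : KExp A T) : Prop :=
  ∀ (S : Type) (τ : T → Set S) (σ : A → S → S → Prop),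
    (∀ p, Functional (σ p)) → Functional (rsem τ σ e)

/-- A guarded language is deterministic: no member is a proper prefix of another, and
any two distinct members first differ at an atom. -/
def DetLang {A T : Type} (L : Set (GList A T)) : Prop :=
  ∀ w ∈ L, ∀ x ∈ L, w ≠ x →
    ∃ (l w' x' : GList A T) (α β : Set T), α ≠ β ∧
      w = l ++ Sum.inl α :: w' ∧ x = l ++ Sum.inl β :: x'

/-- The atom of a state: the set of tests true at it. -/
def atomOf {T S : Type} (τ : T → Set S) (s : S) : Set T := { t | s ∈ τ t }

/-- Labeled paths in an interpretation, together with their induced guarded strings. -/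
inductive IsPath {A T S : Type} (τ : T → Set S) (σ : A → S → S → Prop) :
    S → GList A T → S → Prop
  | nil (s : S) : IsPath τ σ s [Sum.inl (atomOf τ s)] s
  | cons {s s' s'' : S} {p : A} {w : GList A T} :
      σ p s s' → IsPath τ σ s' w s'' →
      IsPath τ σ s (Sum.inl (atomOf τ s) :: Sum.inr p :: w) s''

/-- GKAT expressions. -/
inductive GExp (A T : Type) where
  | assert (b : BExp T) : GExp A T
  | act (p : A) : GExp A T
  | seq (e f : GExp A T) : GExp A T
  | ite (b : BExp T) (e f : GExp A T) : GExp A T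
  | whl (b : BExp T) (e : GExp A T) : GExp A T

/-- Language semantics of GKAT. -/
def glang {A T : Type} : GExp A T → Set (GList A T)
  | .assert b => testLang b
  | .act p => { w | ∃ α β : Set T, w = [Sum.inl α, Sum.inr p, Sum.inl β] }
  | .seq e f => gcomp (glang e) (glang f)
  | .ite b e f => gcomp (testLang b) (glang e) ∪ gcomp (testLang b.not) (glang f)
  | .whl b e => gcomp (gstar (gcomp (testLang b) (glang e))) (testLang b.not)

/-- Output of a deterministic KAT automaton on a state and atom. -/
inductive Out (A Q : Type) where
  | accept : Out A Q
  | reject : Out A Q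
  | step (p : A) (q : Q) : Out A Q

/-- Acceptance in a deterministic KAT automaton with transition function δ,
starting from dynamics γ. -/
inductive AccFrom {A T Q : Type} (δ : Q → Set T → Out A Q) :
    (Set T → Out A Q) → GList A T → Prop
  | accept {γ : Set T → Out A Q} {α : Set T} :
      γ α = Out.accept → AccFrom δ γ [Sum.inl α]
  | step {γ : Set T → Out A Q} {α : Set T} {p : A} {q : Q} {w : GList A T} :
      γ α = Out.step p q → AccFrom δ (δ q) w →
      AccFrom δ γ (Sum.inl α :: Sum.inr p :: w)

/-- Brzozowski derivative of a language with respect to a word. -/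
def dl {A T : Type} (L : Set (GList A T)) (u : GList A T) : Set (GList A T) :=
  { x | u ++ x ∈ L }

/-- An atom β over T₁ is 𝔱-consistent with an atom α over T₀. -/
def TConsistent {T₀ T₁ : Type} (𝔱 : T₀ → BExp T₁) (α : Set T₀) (β : Set T₁) : Prop :=
  ∀ t, t ∈ α ↔ (𝔱 t).holds β

/-- Atom-replacement relation induced by a test substitution 𝔱. -/
inductive TRel {A T₀ T₁ : Type} (𝔱 : T₀ → BExp T₁) : GList A T₀ → GList A T₁ → Prop
  | nil : TRel 𝔱 [] []
  | atom {α : Set T₀} {β : Set T₁} {w : GList A T₀} {x : GList A T₁} :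
      TConsistent 𝔱 α β → TRel 𝔱 w x → TRel 𝔱 (Sum.inl α :: w) (Sum.inl β :: x)
  | act {p : A} {w : GList A T₀} {x : GList A T₁} :
      TRel 𝔱 w x → TRel 𝔱 (Sum.inr p :: w) (Sum.inr p :: x)

/-- apply_𝔱 on guarded languages. -/
def applyT {A T₀ T₁ : Type} (𝔱 : T₀ → BExp T₁) (L : Set (GList A T₀)) : Set (GList A T₁) :=
  { x | ∃ w ∈ L, TRel 𝔱 w x }

/-- Action-replacement relation induced by an action substitution 𝔰: each action is
replaced by a guarded string of 𝔰(p), fused with the surrounding atoms. -/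
inductive SRel {A₀ A₁ T : Type} (𝔰 : A₀ → Set (GList A₁ T)) :
    GList A₀ T → GList A₁ T → Prop
  | single (α : Set T) : SRel 𝔰 [Sum.inl α] [Sum.inl α]
  | step {α β : Set T} {p : A₀} {u : GList A₁ T} {w : GList A₀ T} {x : GList A₁ T} :
      Sum.inl α :: u ++ [Sum.inl β] ∈ 𝔰 p →
      SRel 𝔰 (Sum.inl β :: w) (Sum.inl β :: x) →
      SRel 𝔰 (Sum.inl α :: Sum.inr p :: Sum.inl β :: w) (Sum.inl α :: u ++ Sum.inl β :: x)

/-- apply^𝔰 on guarded languages. -/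
def applyS {A₀ A₁ T : Type} (𝔰 : A₀ → Set (GList A₁ T)) (L : Set (GList A₀ T)) :
    Set (GList A₁ T) :=
  { x | ∃ w ∈ L, SRel 𝔰 w x }

/-- Builder for the guarded strings of the language L_k. -/
def buildLk {k : ℕ} : Fin k → Fin k → List (Fin k) → GList (Fin k) (Fin k)
  | cur, act, [] => [Sum.inl {cur}, Sum.inr act, Sum.inl {cur}]
  | cur, act, j :: rest => Sum.inl {cur} :: Sum.inr act :: buildLk j cur rest

/-- The language L_k of Definition 6.2. -/
def Lk (k : ℕ) (hk : 0 < k) : Set (GList (Fin k) (Fin k)) :=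
  { w | ∃ (i : Fin k) (rest : List (Fin k)),
      i ≠ ⟨0, hk⟩ ∧ List.Chain' (· ≠ ·) (i :: rest) ∧ w = buildLk i ⟨0, hk⟩ rest }

/-- k-density of a deterministic KAT automaton transition function. -/
def KDense {A T Q : Type} (δ : Q → Set T → Out A Q) (k : ℕ) : Prop :=
  ∃ (S : Fin k → Set Q) (α : Fin k → Set T) (pa : Q → Fin k → A),
    Function.Injective α ∧
    (∀ i, (S i).Nonempty) ∧
    (∀ i q, q ∈ S i → δ q (α i) = Out.accept) ∧
    (∀ i j q, i ≠ j → q ∈ S i → ∃ q' ∈ S j, δ q (α j) = Out.step (pa q j) q') ∧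
    (∀ i j m q q', q ∈ S i → q' ∈ S j → pa q m = pa q' m → i = j)

/-- The sequence of actions occurring in a guarded string. -/
def actsOf {A T : Type} (w : GList A T) : List A :=
  w.filterMap (fun x => match x with | .inl _ => none | .inr p => some p)

/-- The guarded language of a word over Σ: all guarded strings with that action sequence. -/
def wordLang {A T : Type} (ps : List A) : Set (GList A T) :=
  { w | IsGuarded w ∧ actsOf w = ps }

/-- Test expressions without test variables. -/
def BExp.varFree {T : Type} : BExp T → Prop
  | .tru => True
  | .fls => True
  | .var _ => False
  | .or b c => BExp.varFree b ∧ BExp.varFree c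
  | .and b c => BExp.varFree b ∧ BExp.varFree c
  | .not b => BExp.varFree b

/-- KA expressions: KAT expressions with no test variables. -/
def KExp.testFree {A T : Type} : KExp A T → Prop
  | .test b => b.varFree
  | .act _ => True
  | .plus e f => KExp.testFree e ∧ KExp.testFree f
  | .seq e f => KExp.testFree e ∧ KExp.testFree f
  | .star e => KExp.testFree e

lemma setEmpty_eq (s t : Set Empty) : s = t := Set.ext fun x => x.elim

/-- Inversion: if `SRel 𝔰 w x` and `x` has a single action, then `w` has shape
`inl a :: inr p :: inl b :: w'` with `x ∈ 𝔰 p` and a trivial tail relation. -/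
lemma srel_single_act {A₀ A₁ T : Type} {𝔰 : A₀ → Set (GList A₁ T)} {w : GList A₀ T}
    {q : A₁} {a b : Set T}
    (h : SRel 𝔰 w [Sum.inl a, Sum.inr q, Sum.inl b]) :
    ∃ (p : A₀) (w' : GList A₀ T),
      w = Sum.inl a :: Sum.inr p :: Sum.inl b :: w' ∧
      ([Sum.inl a, Sum.inr q, Sum.inl b] : GList A₁ T) ∈ 𝔰 p ∧
      SRel 𝔰 (Sum.inl b :: w') [Sum.inl b] := by
  generalize hx : ([Sum.inl a, Sum.inr q, Sum.inl b] : GList A₁ T) = x at h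
  cases h with
  | single α => simp at hx
  | step hmem htail =>
    rename_i α β p u w' x'
    obtain ⟨h1, h2⟩ : Sum.inl a = (Sum.inl α : Set T ⊕ A₁) ∧
        ([Sum.inr q, Sum.inl b] : GList A₁ T) = u ++ Sum.inl β :: x' := by
      simpa using hx
    match u, h2 with
    | [], h2 => simp at h2
    | [c], h2 =>
      obtain ⟨hc, hb, hx'⟩ : c = (Sum.inr q : Set T ⊕ A₁) ∧ Sum.inl b = (Sum.inl β : Set T ⊕ A₁) ∧ x' = [] := by
        constructor
        · exact (List.cons.injEq _ _ _ _ ▸ h2).1.symm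
        · have := (List.cons.injEq _ _ _ _ ▸ h2).2
          simp at this
          exact ⟨by simp [this.1], this.2⟩
      have ha : a = α := by simpa using h1
      have hb' : b = β := by simpa using hb
      subst ha hb' hc hx'
      exact ⟨p, w', rfl, by simpa using hmem, htail⟩
    | c :: d :: u2, h2 =>
      exfalso
      have := (List.cons.injEq _ _ _ _ ▸ h2).2
      simp at this

/-- binary intersection of guarded languages is not a regular operation. -/
theorem intersection_not_regular :
    ¬ ∃ e : KExp (Fin 2) Empty,
      ∀ (A T : Type) (L₁ L₂ : Set (GList A T)),
        (∀ w ∈ L₁, IsGuarded w) → (∀ w ∈ L₂, IsGuarded w) →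
        applyS (fun i => if i = 0 then L₁ else L₂)
          (applyT (fun t => t.elim) (lang e)) = L₁ ∩ L₂ := by
  rintro ⟨e, h⟩
  -- the counterexample: three actions, no tests
  let g : Fin 3 → GList (Fin 3) Empty :=
    fun i => [Sum.inl ∅, Sum.inr i, Sum.inl ∅]
  have hG : ∀ i, IsGuarded (g i) := fun i => .cons _ _ (.single _)
  let L₁ : Set (GList (Fin 3) Empty) := {g 0, g 1}
  let L₂ : Set (GList (Fin 3) Empty) := {g 1, g 2}
  have key := h (Fin 3) Empty L₁ L₂
    (by rintro w (rfl | rfl) <;> exact hG _)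
    (by rintro w (rfl | rfl) <;> exact hG _)
  have h2 : g 1 ∈ applyS (fun i => if i = 0 then L₁ else L₂)
      (applyT (fun t => t.elim) (lang e)) := by
    rw [key]
    exact ⟨Or.inr rfl, Or.inl rfl⟩
  obtain ⟨w, hw, hrel⟩ := h2
  obtain ⟨p, w', hwshape, hmem, htail⟩ := srel_single_act hrel
  -- build the bad string depending on p
  have build : ∀ q : Fin 3,
      ([Sum.inl ∅, Sum.inr q, Sum.inl ∅] : GList (Fin 3) Empty) ∈
        (if p = 0 then L₁ else L₂) →
      g q ∈ applyS (fun i => if i = 0 then L₁ else L₂)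
        (applyT (fun t => t.elim) (lang e)) := by
    intro q hq
    refine ⟨w, hw, ?_⟩
    rw [hwshape]
    have := SRel.step (𝔰 := fun i => if i = 0 then L₁ else L₂)
      (α := (∅ : Set Empty)) (β := (∅ : Set Empty)) (p := p)
      (u := [Sum.inr q]) (w := w') (x := []) (by simpa using hq) htail
    simpa using this
  fin_cases p
  · -- p = 0 : then g 0 would be in the intersection, but g 0 ∉ L₂
    have hg0 : g 0 ∈ L₁ ∩ L₂ := by
      rw [← key]
      exact build 0 (by simp [L₁, g])
    have := hg0.2
    rcases this with h' | h' <;> simp [g] at h'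
  · -- p = 1 : then g 2 would be in the intersection, but g 2 ∉ L₁
    have hg2 : g 2 ∈ L₁ ∩ L₂ := by
      rw [← key]
      refine build 2 ?_
      have hne : (⟨1, by omega⟩ : Fin 2) ≠ 0 := by decide
      simp [hne, L₂, g]
    have := hg2.1
    rcases this with h' | h' <;> simp [g] at h'
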